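/- Let μ be a probability measure, 1 ≤ q < p < ∞, and E a subspace of L^p(μ). If there is C ≥ 1 with ‖f‖_p ≤ C‖f‖_q for all f ∈ E and E does K-stable phase retrieval in L^q(μ), then for every r with q ≤ r ≤ p, E does CK-stable phase retrieval in L^r(μ): for all f, g ∈ E, min(‖f-g‖_r, ‖f+g‖_r) ≤ CK·‖|f|-|g|‖_r. -/

import Mathlib

open MeasureTheory
open scoped ENNReal

/-- Interpolation of stable phase retrieval: if on a probability space `‖·‖_p ≤ C‖·‖_q`
on `E ⊆ L^p` and `E` does `K`-stable phase retrieval in `L^q` (`q < p`), then for any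
`q ≤ r ≤ p`, `E` does `CK`-stable phase retrieval in `L^r`. -/
theorem SPR_interpolation {Ω : Type*} [MeasurableSpace Ω] (μ : Measure Ω)
    [IsProbabilityMeasure μ] (p q r : ℝ≥0∞) [Fact (1 ≤ p)]
    (h1q : 1 ≤ q) (hqp : q < p) (hp : p ≠ ∞) (hqr : q ≤ r) (hrp : r ≤ p)
    (E : Submodule ℝ (Lp ℝ p μ)) (C K : ℝ≥0∞) (hC : 1 ≤ C)
    (hnorm : ∀ f ∈ E, eLpNorm (⇑f) p μ ≤ C * eLpNorm (⇑f) q μ)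
    (hK : ∀ f ∈ E, ∀ g ∈ E,
      min (eLpNorm (⇑f - ⇑g) q μ) (eLpNorm (⇑f + ⇑g) q μ) ≤
        K * eLpNorm (fun ω => |f ω| - |g ω|) q μ) :
    ∀ f ∈ E, ∀ g ∈ E,
      min (eLpNorm (⇑f - ⇑g) r μ) (eLpNorm (⇑f + ⇑g) r μ) ≤
        C * K * eLpNorm (fun ω => |f ω| - |g ω|) r μ := by
  intro f hf g hg
  have hfm := (Lp.aestronglyMeasurable f)
  have hgm := (Lp.aestronglyMeasurable g)
  have hsubm : AEStronglyMeasurable (⇑f - ⇑g) μ := hfm.sub hgm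
  have haddm : AEStronglyMeasurable (⇑f + ⇑g) μ := hfm.add hgm
  have habs : AEStronglyMeasurable (fun ω => |f ω| - |g ω|) μ := (hfm.norm.sub hgm.norm).congr (by filter_upwards with ω; simp [Real.norm_eq_abs])
  -- eLpNorm of coerced sub/add equals eLpNorm of function sub/add
  have hsub_eq : eLpNorm (⇑(f - g)) p μ = eLpNorm (⇑f - ⇑g) p μ :=
    eLpNorm_congr_ae (Lp.coeFn_sub f g)
  have hsub_eq' : eLpNorm (⇑(f - g)) q μ = eLpNorm (⇑f - ⇑g) q μ :=
    eLpNorm_congr_ae (Lp.coeFn_sub f g)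
  have hadd_eq : eLpNorm (⇑(f + g)) p μ = eLpNorm (⇑f + ⇑g) p μ :=
    eLpNorm_congr_ae (Lp.coeFn_add f g)
  have hadd_eq' : eLpNorm (⇑(f + g)) q μ = eLpNorm (⇑f + ⇑g) q μ :=
    eLpNorm_congr_ae (Lp.coeFn_add f g)
  have h1 : eLpNorm (⇑f - ⇑g) r μ ≤ eLpNorm (⇑f - ⇑g) p μ :=
    eLpNorm_le_eLpNorm_of_exponent_le hrp hsubm
  have h2 : eLpNorm (⇑f + ⇑g) r μ ≤ eLpNorm (⇑f + ⇑g) p μ :=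
    eLpNorm_le_eLpNorm_of_exponent_le hrp haddm
  have h3 : eLpNorm (⇑f - ⇑g) p μ ≤ C * eLpNorm (⇑f - ⇑g) q μ := by
    have := hnorm (f - g) (E.sub_mem hf hg)
    rwa [hsub_eq, hsub_eq'] at this
  have h4 : eLpNorm (⇑f + ⇑g) p μ ≤ C * eLpNorm (⇑f + ⇑g) q μ := by
    have := hnorm (f + g) (E.add_mem hf hg)
    rwa [hadd_eq, hadd_eq'] at this
  have h5 := hK f hf g hg
  have h6 : eLpNorm (fun ω => |f ω| - |g ω|) q μ ≤ eLpNorm (fun ω => |f ω| - |g ω|) r μ :=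
    eLpNorm_le_eLpNorm_of_exponent_le hqr habs
  calc min (eLpNorm (⇑f - ⇑g) r μ) (eLpNorm (⇑f + ⇑g) r μ)
      ≤ min (C * eLpNorm (⇑f - ⇑g) q μ) (C * eLpNorm (⇑f + ⇑g) q μ) :=
        min_le_min (h1.trans h3) (h2.trans h4)
    _ = C * min (eLpNorm (⇑f - ⇑g) q μ) (eLpNorm (⇑f + ⇑g) q μ) :=
        (mul_min_of_nonneg _ _ (zero_le : 0 ≤ C)).symm
    _ ≤ C * (K * eLpNorm (fun ω => |f ω| - |g ω|) q μ) := by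
        exact mul_le_mul_right h5 C
    _ ≤ C * K * eLpNorm (fun ω => |f ω| - |g ω|) r μ := by
        rw [mul_assoc]; exact mul_le_mul_right (mul_le_mul_right h6 K) C
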